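/- Let T be a dagger Frobenius monad on a dagger category C. An Eilenberg–Moore algebra (A, a) is a Frobenius–Eilenberg–Moore algebra (i.e. satisfies μ_A ∘ T(a)† = T(a) ∘ μ_A†) if and only if a† : A ⟶ T A is an algebra homomorphism from (A, a) to the free algebra (T A, μ_A), i.e. μ_A ∘ T(a†) = a† ∘ a. -/
import Mathlib


open CategoryTheory

/-- A dagger on a category: an involutive, identity-on-objects, contravariant endofunctor. -/
class DaggerCategory (C : Type*) [Category C] where
  dag : ∀ {A B : C}, (A ⟶ B) → (B ⟶ A)
  dag_id : ∀ (A : C), dag (𝟙 A) = 𝟙 A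
  dag_comp : ∀ {A B D : C} (f : A ⟶ B) (g : B ⟶ D), dag (f ≫ g) = dag g ≫ dag f
  dag_dag : ∀ {A B : C} (f : A ⟶ B), dag (dag f) = f

open DaggerCategory
/-- An Eilenberg–Moore algebra is Frobenius–Eilenberg–Moore iff `a†` is an algebra
homomorphism from `(A, a)` to the free algebra `(T A, μ_A)`. -/
theorem fem_iff_dagger_hom {C : Type*} [Category C] [DaggerCategory C] (T : Monad C)
    (hT : ∀ {A B : C} (f : A ⟶ B), T.map (dag f) = dag (T.map f))
    (hfrob : ∀ A : C,
      dag (T.μ.app (T.obj A)) ≫ T.map (T.μ.app A)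
        = T.map (dag (T.μ.app A)) ≫ T.μ.app (T.obj A))
    {A : C} (a : T.obj A ⟶ A)
    (ha₁ : T.η.app A ≫ a = 𝟙 A) (ha₂ : T.map a ≫ a = T.μ.app A ≫ a) :
    (dag (T.map a) ≫ T.μ.app A = dag (T.μ.app A) ≫ T.map a) ↔
    (T.map (dag a) ≫ T.μ.app A = a ≫ dag a) := by
  -- naturality of δ = dag μ
  have δnat : ∀ {X Y : C} (f : X ⟶ Y),
      T.map f ≫ dag (T.μ.app Y) = dag (T.μ.app X) ≫ T.map (T.map f) := by
    intro X Y f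
    have h := T.μ.naturality (dag f)
    simp only [Functor.comp_map, hT] at h
    have h' := congrArg dag h
    simp only [dag_comp, dag_dag] at h'
    exact h'.symm
  -- identity (I): δ_A = η_{TA} ≫ δ_{TA} ≫ T μ_A
  have hI : ∀ B : C, T.η.app (T.obj B) ≫ dag (T.μ.app (T.obj B)) ≫ T.map (T.μ.app B)
      = dag (T.μ.app B) := by
    intro B
    rw [hfrob B]
    have hη := T.η.naturality (dag (T.μ.app B))
    simp only [Functor.id_map, Functor.comp_obj] at hη
    rw [← Category.assoc, ← hη, Category.assoc, T.left_unit, Category.comp_id]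
  constructor
  · intro h
    -- (†): dag a = η_A ≫ dag μ_A ≫ T a
    have hdag : T.η.app A ≫ dag (T.μ.app A) ≫ T.map a = dag a := by
      rw [← h]
      have hη := T.η.naturality (dag a)
      simp only [Functor.id_map, Functor.id_obj] at hη
      rw [← hT, ← Category.assoc, ← hη, Category.assoc, T.left_unit]
      simp
    rw [hT, ← hdag]
    symm
    have hη := T.η.naturality a
    simp only [Functor.id_map] at hη
    calc a ≫ T.η.app A ≫ dag (T.μ.app A) ≫ T.map a
        = (a ≫ T.η.app A) ≫ dag (T.μ.app A) ≫ T.map a := by simp [Category.assoc]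
      _ = T.η.app (T.obj A) ≫ (T.map a ≫ dag (T.μ.app A)) ≫ T.map a := by
          rw [hη]; simp [Category.assoc]
      _ = T.η.app (T.obj A) ≫ (dag (T.μ.app (T.obj A)) ≫ T.map (T.map a)) ≫ T.map a := by
          rw [δnat a]
      _ = T.η.app (T.obj A) ≫ dag (T.μ.app (T.obj A)) ≫ T.map (T.map a ≫ a) := by
          simp [Category.assoc, Functor.map_comp]
      _ = T.η.app (T.obj A) ≫ dag (T.μ.app (T.obj A)) ≫ T.map (T.μ.app A ≫ a) := by rw [ha₂]
      _ = (T.η.app (T.obj A) ≫ dag (T.μ.app (T.obj A)) ≫ T.map (T.μ.app A)) ≫ T.map a := by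
          simp [Category.assoc, Functor.map_comp]
      _ = dag (T.μ.app A) ≫ T.map a := by rw [hI A]
      _ = dag (T.map a) ≫ T.μ.app A := h.symm
  · intro h
    rw [hT] at h
    have h' := congrArg dag h
    rw [dag_comp, dag_comp, dag_dag, dag_dag] at h'
    rw [h, h']
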